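/- arXiv:2404.00522 — 2 statements merged into one kernel-verified Lean document; each statement's English description precedes it below -/
import Mathlib

section
/- Under the linear regression with distribution shift setup, the minimum-norm interpolator trained on source data satisfies the target excess risk upper bound R(θ̂(y), D_t) ≤ 4‖θ*_s − θ*_t‖²_{Σ̃} + 4‖θ*_s − θ̂(Xθ*_s)‖²_{Σ̃} + 2‖θ̂(ε_s)‖²_{Σ̃}, where θ̂(ξ) = Xᵀ(XXᵀ)⁻¹ξ for ξ ∈ ℝⁿ and y = Xθ*_s + ε_s. -/
open MeasureTheory Matrix

section Aux

variable {α : Type*} [MeasurableSpace α] {μ : Measure α}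

lemma myIntegrableMul {f g : α → ℝ} (hf : MemLp f 2 μ) (hg : MemLp g 2 μ) :
    Integrable (fun x => f x * g x) μ := by
  have h1 := (hf.add hg).integrable_sq
  have h2 := hf.integrable_sq
  have h3 := hg.integrable_sq
  have h := (((h1.sub h2).sub h3).const_mul (1/2 : ℝ))
  refine h.congr (Filter.Eventually.of_forall fun x => ?_)
  simp only [Pi.add_apply, Pi.sub_apply]
  ring

end Aux

section Lin

@[reducible] def mFst (p : ℕ) : MeasurableSpace ((Fin p → ℝ) × ℝ) :=
  MeasurableSpace.comap Prod.fst inferInstance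

variable {p : ℕ} {Dt : Measure ((Fin p → ℝ) × ℝ)}

lemma memL2_lin (hxL2 : ∀ i, MemLp (fun q : (Fin p → ℝ) × ℝ => q.1 i) 2 Dt)
    (v : Fin p → ℝ) : MemLp (fun q : (Fin p → ℝ) × ℝ => ∑ i, q.1 i * v i) 2 Dt := by
  have : ∀ i : Fin p, MemLp (fun q : (Fin p → ℝ) × ℝ => q.1 i * v i) 2 Dt := fun i =>
    ((hxL2 i).const_mul (v i)).ae_eq (Filter.Eventually.of_forall fun q => mul_comm _ _)
  have h := memLp_finset_sum Finset.univ (fun i _ => this i)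
  exact h.ae_eq (Filter.Eventually.of_forall fun q => by simp)

lemma integral_sq_lin [IsProbabilityMeasure Dt]
    (hxL2 : ∀ i, MemLp (fun q : (Fin p → ℝ) × ℝ => q.1 i) 2 Dt)
    (covT : Matrix (Fin p) (Fin p) ℝ)
    (hcovT : ∀ i j, covT i j = ∫ q, q.1 i * q.1 j ∂Dt)
    (v : Fin p → ℝ) :
    ∫ q, (∑ i, q.1 i * v i) ^ 2 ∂Dt = v ⬝ᵥ covT.mulVec v := by
  have key : ∀ q : (Fin p → ℝ) × ℝ,
      (∑ i, q.1 i * v i) ^ 2 = ∑ i, ∑ j, (v i * v j) * (q.1 i * q.1 j) := by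
    intro q
    rw [sq, Finset.sum_mul_sum]
    exact Finset.sum_congr rfl fun i _ => Finset.sum_congr rfl fun j _ => by ring
  have hint : ∀ i j : Fin p,
      Integrable (fun q : (Fin p → ℝ) × ℝ => (v i * v j) * (q.1 i * q.1 j)) Dt :=
    fun i j => (myIntegrableMul (hxL2 i) (hxL2 j)).const_mul _
  calc ∫ q, (∑ i, q.1 i * v i) ^ 2 ∂Dt
      = ∫ q, ∑ i, ∑ j, (v i * v j) * (q.1 i * q.1 j) ∂Dt := by
        exact integral_congr_ae (Filter.Eventually.of_forall fun q => key q)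
    _ = ∑ i, ∑ j, ∫ q, (v i * v j) * (q.1 i * q.1 j) ∂Dt := by
        rw [integral_finset_sum _ fun i _ => integrable_finset_sum _ fun j _ => hint i j]
        exact Finset.sum_congr rfl fun i _ => integral_finset_sum _ fun j _ => hint i j
    _ = ∑ i, ∑ j, (v i * v j) * covT i j := by
        exact Finset.sum_congr rfl fun i _ => Finset.sum_congr rfl fun j _ => by
          rw [integral_const_mul, hcovT]
    _ = v ⬝ᵥ covT.mulVec v := by
        simp only [dotProduct, mulVec, Finset.mul_sum]
        exact Finset.sum_congr rfl fun i _ => Finset.sum_congr rfl fun j _ => by ring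

lemma cross_zero [IsProbabilityMeasure Dt] (θt : Fin p → ℝ)
    (hxL2 : ∀ i, MemLp (fun q : (Fin p → ℝ) × ℝ => q.1 i) 2 Dt)
    (hresL2 : MemLp (fun q : (Fin p → ℝ) × ℝ => q.2 - ∑ i, q.1 i * θt i) 2 Dt)
    (hws : Dt[(fun q : (Fin p → ℝ) × ℝ => q.2 - ∑ i, q.1 i * θt i) |
        MeasurableSpace.comap Prod.fst inferInstance] =ᵐ[Dt] 0)
    (v : Fin p → ℝ) :
    ∫ q, (∑ i, q.1 i * v i) * (q.2 - ∑ i, q.1 i * θt i) ∂Dt = 0 := by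
  have hm : mFst p ≤ Prod.instMeasurableSpace := measurable_fst.comap_le
  set g : (Fin p → ℝ) × ℝ → ℝ := fun q => ∑ i, q.1 i * v i with hg_def
  set r : (Fin p → ℝ) × ℝ → ℝ := fun q => q.2 - ∑ i, q.1 i * θt i with hr_def
  have hgm : StronglyMeasurable[mFst p] g := by
    have h1 : Measurable[mFst p] (Prod.fst : (Fin p → ℝ) × ℝ → Fin p → ℝ) :=
      @Measurable.of_comap_le _ _ (mFst p) _ _ le_rfl
    have h2 : Measurable (fun x : Fin p → ℝ => ∑ i, x i * v i) := by
      exact Finset.measurable_sum _ fun i _ => (measurable_pi_apply i).mul_const _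
    exact (h2.comp h1).stronglyMeasurable
  have hr_int : Integrable r Dt := hresL2.integrable one_le_two
  have hgr_int : Integrable (g * r) Dt := myIntegrableMul (memL2_lin hxL2 v) hresL2
  have h1 : Dt[g * r | mFst p] =ᵐ[Dt] g * Dt[r | mFst p] :=
    condExp_mul_of_stronglyMeasurable_left hgm hgr_int hr_int
  have h2 : Dt[g * r | mFst p] =ᵐ[Dt] 0 := by
    refine h1.trans ?_
    filter_upwards [hws] with q hq
    simp [hq]
  have h3 : ∫ q, (Dt[g * r | mFst p]) q ∂Dt = ∫ q, (g * r) q ∂Dt := integral_condExp hm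
  have h4 : ∫ q, (Dt[g * r | mFst p]) q ∂Dt = 0 := by
    rw [integral_congr_ae h2]; simp
  have : ∫ q, (g * r) q ∂Dt = 0 := by rw [← h3, h4]
  simpa [hg_def, hr_def] using this

end Lin

lemma quad_bound (S A B C : ℝ) :
    (A - (B + C)) ^ 2 ≤ 4 * (S - A) ^ 2 + 4 * (S - B) ^ 2 + 2 * C ^ 2 := by
  nlinarith [sq_nonneg ((S - A) + (S - B)), sq_nonneg ((S - B) - (S - A) + C)]


/-- **Target excess risk upper bound for the minimum-norm interpolator.**
Under the linear regression with distribution shift setup, with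
`θ̂(ξ) = Xᵀ(XXᵀ)⁻¹ξ` and `y = Xθ*_s + ε_s`,
`R(θ̂(y), D_t) ≤ 4‖θ*_s − θ*_t‖²_{Σ̃} + 4‖θ*_s − θ̂(Xθ*_s)‖²_{Σ̃} + 2‖θ̂(ε_s)‖²_{Σ̃}`. -/
theorem mni_target_excess_risk_upper_bound
    (n p : ℕ) (hnp : n < p)
    (Dt : Measure ((Fin p → ℝ) × ℝ)) [IsProbabilityMeasure Dt]
    (θt θs : Fin p → ℝ)
    -- centered target covariates
    (hcent : ∀ i, ∫ q, q.1 i ∂Dt = 0)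
    -- finite second moments
    (hxL2 : ∀ i, MemLp (fun q : (Fin p → ℝ) × ℝ => q.1 i) 2 Dt)
    (hresL2 : MemLp (fun q : (Fin p → ℝ) × ℝ => q.2 - ∑ i, q.1 i * θt i) 2 Dt)
    -- target covariance Σ̃ = E[xxᵀ]
    (covT : Matrix (Fin p) (Fin p) ℝ)
    (hcovT : ∀ i j, covT i j = ∫ q, q.1 i * q.1 j ∂Dt)
    -- well-specified target: E[y − xᵀθ*_t | x] = 0
    (hws : Dt[(fun q : (Fin p → ℝ) × ℝ => q.2 - ∑ i, q.1 i * θt i) |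
        MeasurableSpace.comap Prod.fst inferInstance] =ᵐ[Dt] 0)
    -- training data and noise, Gram matrix invertible
    (X : Matrix (Fin n) (Fin p) ℝ) (ε : Fin n → ℝ)
    (hA : IsUnit (X * Xᵀ)) :
    -- R(θ̂(y), D_t) with y = Xθ*_s + ε_s
    (∫ q, ((q.2 - ∑ i, q.1 i *
          (Xᵀ * (X * Xᵀ)⁻¹).mulVec (X.mulVec θs + ε) i) ^ 2
        - (q.2 - ∑ i, q.1 i * θt i) ^ 2) ∂Dt)
      ≤ 4 * ((θs - θt) ⬝ᵥ covT.mulVec (θs - θt))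
        + 4 * ((θs - (Xᵀ * (X * Xᵀ)⁻¹).mulVec (X.mulVec θs))
              ⬝ᵥ covT.mulVec (θs - (Xᵀ * (X * Xᵀ)⁻¹).mulVec (X.mulVec θs)))
        + 2 * ((Xᵀ * (X * Xᵀ)⁻¹).mulVec ε
              ⬝ᵥ covT.mulVec ((Xᵀ * (X * Xᵀ)⁻¹).mulVec ε)) := by
  have hbc : (Xᵀ * (X * Xᵀ)⁻¹).mulVec (X.mulVec θs + ε)
      = (Xᵀ * (X * Xᵀ)⁻¹).mulVec (X.mulVec θs) + (Xᵀ * (X * Xᵀ)⁻¹).mulVec ε :=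
    Matrix.mulVec_add _ _ _
  set b : Fin p → ℝ := (Xᵀ * (X * Xᵀ)⁻¹).mulVec (X.mulVec θs) with hb
  set c : Fin p → ℝ := (Xᵀ * (X * Xᵀ)⁻¹).mulVec ε with hc
  rw [hbc]
  set d : Fin p → ℝ := θt - (b + c) with hd
  -- linearity of the linear functional
  have fsub : ∀ (u w : Fin p → ℝ) (q : (Fin p → ℝ) × ℝ),
      (∑ i, q.1 i * (u - w) i) = (∑ i, q.1 i * u i) - (∑ i, q.1 i * w i) := by
    intro u w q
    simp [Pi.sub_apply, mul_sub, Finset.sum_sub_distrib]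
  have fadd : ∀ (u w : Fin p → ℝ) (q : (Fin p → ℝ) × ℝ),
      (∑ i, q.1 i * (u + w) i) = (∑ i, q.1 i * u i) + (∑ i, q.1 i * w i) := by
    intro u w q
    simp [Pi.add_apply, mul_add, Finset.sum_add_distrib]
  -- pointwise decomposition of the excess risk integrand
  have hpt : ∀ q : (Fin p → ℝ) × ℝ,
      (q.2 - ∑ i, q.1 i * (b + c) i) ^ 2 - (q.2 - ∑ i, q.1 i * θt i) ^ 2
        = (∑ i, q.1 i * d i) ^ 2
          + 2 * ((∑ i, q.1 i * d i) * (q.2 - ∑ i, q.1 i * θt i)) := by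
    intro q
    rw [hd, fsub]
    ring
  have hdL2 := memL2_lin hxL2 d
  have hd_sq : Integrable (fun q : (Fin p → ℝ) × ℝ => (∑ i, q.1 i * d i) ^ 2) Dt :=
    hdL2.integrable_sq
  have hcross_int : Integrable
      (fun q : (Fin p → ℝ) × ℝ =>
        2 * ((∑ i, q.1 i * d i) * (q.2 - ∑ i, q.1 i * θt i))) Dt :=
    (myIntegrableMul hdL2 hresL2).const_mul 2
  have hstep1 :
      (∫ q, ((q.2 - ∑ i, q.1 i * (b + c) i) ^ 2
          - (q.2 - ∑ i, q.1 i * θt i) ^ 2) ∂Dt)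
        = ∫ q, (∑ i, q.1 i * d i) ^ 2 ∂Dt := by
    rw [integral_congr_ae (Filter.Eventually.of_forall hpt),
      integral_add hd_sq hcross_int, integral_const_mul,
      cross_zero θt hxL2 hresL2 hws d]
    ring
  rw [hstep1]
  -- pointwise quadratic bound
  have hpt2 : ∀ q : (Fin p → ℝ) × ℝ,
      (∑ i, q.1 i * d i) ^ 2
        ≤ 4 * (∑ i, q.1 i * (θs - θt) i) ^ 2
          + 4 * (∑ i, q.1 i * (θs - b) i) ^ 2
          + 2 * (∑ i, q.1 i * c i) ^ 2 := by
    intro q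
    rw [hd, fsub, fadd, fsub, fsub]
    exact quad_bound _ _ _ _
  have hInt2 : Integrable
      (fun q : (Fin p → ℝ) × ℝ =>
        4 * (∑ i, q.1 i * (θs - θt) i) ^ 2
          + 4 * (∑ i, q.1 i * (θs - b) i) ^ 2
          + 2 * (∑ i, q.1 i * c i) ^ 2) Dt :=
    (((memL2_lin hxL2 (θs - θt)).integrable_sq.const_mul 4).add
      ((memL2_lin hxL2 (θs - b)).integrable_sq.const_mul 4)).add
      ((memL2_lin hxL2 c).integrable_sq.const_mul 2)
  have hmono : ∫ q, (∑ i, q.1 i * d i) ^ 2 ∂Dt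
      ≤ ∫ q, (4 * (∑ i, q.1 i * (θs - θt) i) ^ 2
          + 4 * (∑ i, q.1 i * (θs - b) i) ^ 2
          + 2 * (∑ i, q.1 i * c i) ^ 2) ∂Dt :=
    integral_mono hd_sq hInt2 hpt2
  refine hmono.trans (le_of_eq ?_)
  have i1 : Integrable (fun q : (Fin p → ℝ) × ℝ =>
      4 * (∑ i, q.1 i * (θs - θt) i) ^ 2) Dt :=
    (memL2_lin hxL2 (θs - θt)).integrable_sq.const_mul 4
  have i2 : Integrable (fun q : (Fin p → ℝ) × ℝ =>
      4 * (∑ i, q.1 i * (θs - b) i) ^ 2) Dt :=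
    (memL2_lin hxL2 (θs - b)).integrable_sq.const_mul 4
  have i3 : Integrable (fun q : (Fin p → ℝ) × ℝ =>
      2 * (∑ i, q.1 i * c i) ^ 2) Dt :=
    (memL2_lin hxL2 c).integrable_sq.const_mul 2
  have i12 : Integrable (fun q : (Fin p → ℝ) × ℝ =>
      4 * (∑ i, q.1 i * (θs - θt) i) ^ 2 + 4 * (∑ i, q.1 i * (θs - b) i) ^ 2) Dt :=
    i1.add i2
  rw [integral_add i12 i3, integral_add i1 i2,
    integral_const_mul, integral_const_mul, integral_const_mul,
    integral_sq_lin hxL2 covT hcovT, integral_sq_lin hxL2 covT hcovT,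
    integral_sq_lin hxL2 covT hcovT]
end

section
/- Let V̲ = (1/(cn)) Σ_{i=1}^p (λ̃_i/λ_i) min(1, λ_i²/(λ_{k+1}²(ρ_k+1)²)) and V̄ = c[(1/n) Σ_{i=1}^k λ̃_i/λ_i + n (Σ_{i>k} λ̃_i λ_i)/(Σ_{i>k} λ_i)²] with c > 1 as in the variance bounds. If b ≥ 1, k is the smallest index ℓ with ρ_ℓ ≥ b (so ρ_k ≥ b and ρ_{k−1} < b), and the λ̃_i are nonnegative and not all zero, then V̲/V̄ ∈ [b^{−2}(1+b)^{−2}/c², 1]. -/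
set_option maxHeartbeats 1000000


open Finset

/-- **Tightness of the variance bounds.**  With `V̲` and `V̄` the lower- and
upper-bound expressions for the variance term (same constant `c > 1` in both),
`b ≥ 1`, and `k` the smallest index `ℓ` with `ρ_ℓ ≥ b` (so `ρ_k ≥ b` and
`ρ_{k−1} < b`), nonnegative target eigenvalues not all zero, one has
`V̲/V̄ ∈ [b⁻²(1+b)⁻²/c², 1]`.  (0-based indexing: paper's `λ_{ℓ+1}` is `lam ℓ`.) -/
theorem variance_bounds_tight
    (n p k : ℕ) (hn : 1 ≤ n) (hnp : n < p) (hk : 1 ≤ k) (hkp : k < p)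
    (lam lamt : ℕ → ℝ)
    (hpos : ∀ i, i < p → 0 < lam i)
    (hmono : ∀ i j, i ≤ j → j < p → lam j ≤ lam i)
    (hnneg : ∀ i, i < p → 0 ≤ lamt i)
    (hne : ∃ i, i < p ∧ lamt i ≠ 0)
    (b c : ℝ) (hb : 1 ≤ b) (hc : 1 < c)
    (hrhok : b ≤ (∑ i ∈ Finset.Ico k p, lam i) / (n * lam k))
    (hrhokm : (∑ i ∈ Finset.Ico (k - 1) p, lam i) / (n * lam (k - 1)) < b) :
    let ρ := (∑ i ∈ Finset.Ico k p, lam i) / (n * lam k)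
    let Vlow := (1 / (c * n)) * ∑ i ∈ Finset.range p,
        (lamt i / lam i) * min 1 (lam i ^ 2 / (lam k ^ 2 * (ρ + 1) ^ 2))
    let Vup := c * ((1 / n) * ∑ i ∈ Finset.range k, lamt i / lam i
        + n * (∑ i ∈ Finset.Ico k p, lamt i * lam i)
            / (∑ i ∈ Finset.Ico k p, lam i) ^ 2)
    b⁻¹ ^ 2 * (1 + b)⁻¹ ^ 2 / c ^ 2 ≤ Vlow / Vup ∧ Vlow / Vup ≤ 1 := by
  intro ρ Vlow Vup
  have hρ : ρ = (∑ i ∈ Finset.Ico k p, lam i) / (n * lam k) := rfl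
  have hVlow : Vlow = (1 / (c * n)) * ∑ i ∈ Finset.range p,
      (lamt i / lam i) * min 1 (lam i ^ 2 / (lam k ^ 2 * (ρ + 1) ^ 2)) := rfl
  have hVup : Vup = c * ((1 / n) * ∑ i ∈ Finset.range k, lamt i / lam i
      + n * (∑ i ∈ Finset.Ico k p, lamt i * lam i)
          / (∑ i ∈ Finset.Ico k p, lam i) ^ 2) := rfl
  clear_value ρ Vlow Vup
  have hn0 : (0:ℝ) < n := by exact_mod_cast hn
  have hb0 : (0:ℝ) < b := lt_of_lt_of_le one_pos hb
  have hb1 : (0:ℝ) < 1 + b := by linarith only [hb0]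
  have hc0 : (0:ℝ) < c := lt_trans one_pos hc
  have hkm1p : k - 1 < p := lt_of_le_of_lt (Nat.sub_le k 1) hkp
  have hlamk : 0 < lam k := hpos k hkp
  have hlamkm : 0 < lam (k - 1) := hpos _ hkm1p
  set S : ℝ := ∑ i ∈ Finset.Ico k p, lam i with hSdef
  set T : ℝ := ∑ i ∈ Finset.Ico k p, lamt i * lam i with hTdef
  set A : ℝ := ∑ i ∈ Finset.range k, lamt i / lam i with hAdef
  have hS0 : 0 < S := Finset.sum_pos (fun i hi => hpos i (Finset.mem_Ico.mp hi).2)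
    (Finset.nonempty_Ico.mpr hkp)
  have hT0 : 0 ≤ T := Finset.sum_nonneg (fun i hi =>
    mul_nonneg (hnneg i (Finset.mem_Ico.mp hi).2) (hpos i (Finset.mem_Ico.mp hi).2).le)
  have hA0 : 0 ≤ A := Finset.sum_nonneg (fun i hi =>
    div_nonneg (hnneg i (lt_trans (Finset.mem_range.mp hi) hkp))
      (hpos i (lt_trans (Finset.mem_range.mp hi) hkp)).le)
  have hbS : b * (n * lam k) ≤ S := (le_div_iff₀ (by positivity)).mp hrhok
  have hS' : (∑ i ∈ Finset.Ico (k - 1) p, lam i) < b * (n * lam (k - 1)) :=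
    (div_lt_iff₀ (by positivity)).mp hrhokm
  have hSS' : S ≤ ∑ i ∈ Finset.Ico (k - 1) p, lam i :=
    Finset.sum_le_sum_of_subset_of_nonneg
      (Finset.Ico_subset_Ico (Nat.sub_le k 1) le_rfl)
      (fun i hi _ => (hpos i (Finset.mem_Ico.mp hi).2).le)
  set D : ℝ := lam k * (ρ + 1) with hDdef
  have hbρ : b ≤ ρ := by rw [hρ]; exact hrhok
  have hρ0 : 0 < ρ := lt_of_lt_of_le hb0 hbρ
  have hD0 : 0 < D := mul_pos hlamk (by linarith only [hρ0])
  have hnD : (n:ℝ) * D = n * lam k + S := by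
    rw [hDdef, hρ]; field_simp; ring
  have hD_low : S ≤ n * D := by
    have hnl : (0:ℝ) ≤ (n:ℝ) * lam k := by positivity
    rw [hnD]; linarith only [hnl]
  have hD_up : (n:ℝ) * b * D ≤ (1 + b) * S := by
    have h1 : (n:ℝ) * b * D = b * ((n:ℝ) * D) := by ring
    rw [h1, hnD]
    have : b * ((n:ℝ) * lam k + S) = b * ((n:ℝ) * lam k) + b * S := by ring
    rw [this]
    linarith only [hbS, hS0]
  have hDi : ∀ i, i < k → D ≤ (1 + b) * lam i := by
    intro i hi
    have h1 : lam k ≤ lam (k - 1) := hmono (k - 1) k (Nat.sub_le k 1) hkp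
    have h2 : lam (k - 1) ≤ lam i := hmono i (k - 1) (by omega) hkm1p
    have h3 : (n:ℝ) * D ≤ n * ((1 + b) * lam (k - 1)) := by
      have e : (n:ℝ) * ((1 + b) * lam (k - 1)) = n * lam (k - 1) + b * (n * lam (k - 1)) := by
        ring
      rw [hnD, e]
      have hm := mul_le_mul_of_nonneg_left h1 hn0.le
      linarith only [hm, hSS', hS']
    have h4 : D ≤ (1 + b) * lam (k - 1) := le_of_mul_le_mul_left h3 hn0
    exact h4.trans (mul_le_mul_of_nonneg_left h2 hb1.le)
  have hDsq : lam k ^ 2 * (ρ + 1) ^ 2 = D ^ 2 := (mul_pow _ _ 2).symm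
  have hmin_lt : ∀ i, i < k →
      1 / (1 + b) ^ 2 ≤ min 1 (lam i ^ 2 / (lam k ^ 2 * (ρ + 1) ^ 2)) := by
    intro i hi
    have hli : 0 < lam i := hpos i (lt_trans hi hkp)
    rw [hDsq]
    apply le_min
    · rw [div_le_one (by positivity)]
      have h1b : (1:ℝ) ≤ 1 + b := by linarith only [hb0]
      calc (1:ℝ) = 1 ^ 2 := (one_pow 2).symm
        _ ≤ (1 + b) ^ 2 := pow_le_pow_left₀ zero_le_one h1b 2
    · rw [div_le_div_iff₀ (by positivity) (by positivity)]
      have h := hDi i hi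
      calc 1 * D ^ 2 = D * D := by ring
        _ ≤ ((1 + b) * lam i) * ((1 + b) * lam i) :=
            mul_le_mul h h hD0.le (by positivity)
        _ = lam i ^ 2 * (1 + b) ^ 2 := by ring
  have hmin_eq : ∀ i ∈ Finset.Ico k p,
      min 1 (lam i ^ 2 / (lam k ^ 2 * (ρ + 1) ^ 2)) = lam i ^ 2 / D ^ 2 := by
    intro i hi
    obtain ⟨hki, hip⟩ := Finset.mem_Ico.mp hi
    have hli : 0 < lam i := hpos i hip
    have hlik : lam i ≤ lam k := hmono k i hki hip
    have hkD : lam k ≤ D := by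
      rw [hDdef]
      calc lam k = lam k * 1 := (mul_one _).symm
        _ ≤ lam k * (ρ + 1) := by
            apply mul_le_mul_of_nonneg_left _ hlamk.le
            linarith only [hρ0]
    rw [hDsq]
    apply min_eq_right
    rw [div_le_one (by positivity)]
    exact pow_le_pow_left₀ hli.le (hlik.trans hkD) 2
  have hsplit : ∀ f : ℕ → ℝ, ∑ i ∈ Finset.range p, f i
      = ∑ i ∈ Finset.range k, f i + ∑ i ∈ Finset.Ico k p, f i := by
    intro f
    rw [Finset.range_eq_Ico, Finset.range_eq_Ico]
    exact (Finset.sum_Ico_consecutive f (Nat.zero_le k) hkp.le).symm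
  set P : ℝ := ∑ i ∈ Finset.range p,
      (lamt i / lam i) * min 1 (lam i ^ 2 / (lam k ^ 2 * (ρ + 1) ^ 2)) with hPdef
  have hIco : ∑ i ∈ Finset.Ico k p,
      (lamt i / lam i) * min 1 (lam i ^ 2 / (lam k ^ 2 * (ρ + 1) ^ 2)) = T / D ^ 2 := by
    rw [hTdef, Finset.sum_div]
    apply Finset.sum_congr rfl
    intro i hi
    have hli : 0 < lam i := hpos i (Finset.mem_Ico.mp hi).2
    rw [hmin_eq i hi]
    field_simp
  have hPsplit : P = (∑ i ∈ Finset.range k,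
      (lamt i / lam i) * min 1 (lam i ^ 2 / (lam k ^ 2 * (ρ + 1) ^ 2))) + T / D ^ 2 := by
    rw [hPdef, hsplit, hIco]
  have hhead_up : ∑ i ∈ Finset.range k,
      (lamt i / lam i) * min 1 (lam i ^ 2 / (lam k ^ 2 * (ρ + 1) ^ 2)) ≤ A := by
    rw [hAdef]
    apply Finset.sum_le_sum
    intro i hi
    have hip : i < p := lt_trans (Finset.mem_range.mp hi) hkp
    have ha : 0 ≤ lamt i / lam i := div_nonneg (hnneg i hip) (hpos i hip).le
    calc (lamt i / lam i) * min 1 (lam i ^ 2 / (lam k ^ 2 * (ρ + 1) ^ 2))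
        ≤ (lamt i / lam i) * 1 := mul_le_mul_of_nonneg_left (min_le_left _ _) ha
      _ = lamt i / lam i := mul_one _
  have hhead_low : A / (1 + b) ^ 2 ≤ ∑ i ∈ Finset.range k,
      (lamt i / lam i) * min 1 (lam i ^ 2 / (lam k ^ 2 * (ρ + 1) ^ 2)) := by
    rw [hAdef, Finset.sum_div]
    apply Finset.sum_le_sum
    intro i hi
    have hik : i < k := Finset.mem_range.mp hi
    have hip : i < p := lt_trans hik hkp
    have ha : 0 ≤ lamt i / lam i := div_nonneg (hnneg i hip) (hpos i hip).le
    calc lamt i / lam i / (1 + b) ^ 2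
        = (lamt i / lam i) * (1 / (1 + b) ^ 2) := by ring
      _ ≤ (lamt i / lam i) * min 1 (lam i ^ 2 / (lam k ^ 2 * (ρ + 1) ^ 2)) :=
          mul_le_mul_of_nonneg_left (hmin_lt i hik) ha
  set X : ℝ := A + (n:ℝ) ^ 2 * T / S ^ 2 with hXdef
  have hbb : (1:ℝ) ≤ b ^ 2 := by
    calc (1:ℝ) = 1 ^ 2 := (one_pow 2).symm
      _ ≤ b ^ 2 := pow_le_pow_left₀ zero_le_one hb 2
  have hsqlow : S ^ 2 ≤ (n:ℝ) ^ 2 * D ^ 2 := by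
    calc S ^ 2 = S * S := sq S
      _ ≤ ((n:ℝ) * D) * ((n:ℝ) * D) :=
          mul_le_mul hD_low hD_low hS0.le (by positivity)
      _ = (n:ℝ) ^ 2 * D ^ 2 := by ring
  have hsqup : (n:ℝ) ^ 2 * b ^ 2 * D ^ 2 ≤ (1 + b) ^ 2 * S ^ 2 := by
    calc (n:ℝ) ^ 2 * b ^ 2 * D ^ 2 = ((n:ℝ) * b * D) * ((n:ℝ) * b * D) := by ring
      _ ≤ ((1 + b) * S) * ((1 + b) * S) :=
          mul_le_mul hD_up hD_up (by positivity) (by positivity)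
      _ = (1 + b) ^ 2 * S ^ 2 := by ring
  have hPup : P ≤ X := by
    rw [hPsplit, hXdef]
    have htail : T / D ^ 2 ≤ (n:ℝ) ^ 2 * T / S ^ 2 := by
      rw [div_le_div_iff₀ (by positivity) (by positivity)]
      calc T * S ^ 2 ≤ T * ((n:ℝ) ^ 2 * D ^ 2) := mul_le_mul_of_nonneg_left hsqlow hT0
        _ = (n:ℝ) ^ 2 * T * D ^ 2 := by ring
    linarith only [hhead_up, htail]
  have hPlow : X / (b ^ 2 * (1 + b) ^ 2) ≤ P := by
    rw [hPsplit, hXdef, add_div]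
    have h1 : A / (b ^ 2 * (1 + b) ^ 2) ≤ A / (1 + b) ^ 2 := by
      apply div_le_div_of_nonneg_left hA0 (by positivity)
      calc (1 + b) ^ 2 = 1 * (1 + b) ^ 2 := (one_mul _).symm
        _ ≤ b ^ 2 * (1 + b) ^ 2 := mul_le_mul_of_nonneg_right hbb (by positivity)
    have h2 : (n:ℝ) ^ 2 * T / S ^ 2 / (b ^ 2 * (1 + b) ^ 2) ≤ T / D ^ 2 := by
      rw [div_div]
      rw [div_le_div_iff₀ (by positivity) (by positivity)]
      calc (n:ℝ) ^ 2 * T * D ^ 2 = 1 * (T * ((n:ℝ) ^ 2 * D ^ 2)) := by ring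
        _ ≤ b ^ 2 * (T * ((n:ℝ) ^ 2 * D ^ 2)) := by
            apply mul_le_mul_of_nonneg_right hbb
            exact mul_nonneg hT0 (by positivity)
        _ = T * ((n:ℝ) ^ 2 * b ^ 2 * D ^ 2) := by ring
        _ ≤ T * ((1 + b) ^ 2 * S ^ 2) := mul_le_mul_of_nonneg_left hsqup hT0
        _ = 1 * (T * ((1 + b) ^ 2 * S ^ 2)) := by ring
        _ ≤ b ^ 2 * (T * ((1 + b) ^ 2 * S ^ 2)) := by
            apply mul_le_mul_of_nonneg_right hbb
            exact mul_nonneg hT0 (by positivity)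
        _ = T * (S ^ 2 * (b ^ 2 * (1 + b) ^ 2)) := by ring
    linarith only [hhead_low, h1, h2]
  have hX0 : 0 < X := by
    obtain ⟨i, hip, hine⟩ := hne
    have hlt : 0 < lamt i := lt_of_le_of_ne (hnneg i hip) (Ne.symm hine)
    have hTn : 0 ≤ (n:ℝ) ^ 2 * T / S ^ 2 := by positivity
    rcases lt_or_ge i k with hik | hik
    · have hApos : 0 < A := by
        rw [hAdef]
        apply Finset.sum_pos'
        · intro j hj
          have hjp : j < p := lt_trans (Finset.mem_range.mp hj) hkp
          exact div_nonneg (hnneg j hjp) (hpos j hjp).le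
        · exact ⟨i, Finset.mem_range.mpr hik, div_pos hlt (hpos i hip)⟩
      rw [hXdef]; linarith only [hApos, hTn]
    · have hTpos : 0 < T := by
        rw [hTdef]
        apply Finset.sum_pos'
        · intro j hj
          exact mul_nonneg (hnneg j (Finset.mem_Ico.mp hj).2)
            (hpos j (Finset.mem_Ico.mp hj).2).le
        · exact ⟨i, Finset.mem_Ico.mpr ⟨hik, hip⟩, mul_pos hlt (hpos i hip)⟩
      rw [hXdef]
      have h5 : 0 < (n:ℝ) ^ 2 * T / S ^ 2 := by positivity
      linarith only [hA0, h5]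
  have hP0 : 0 < P := lt_of_lt_of_le (by positivity) hPlow
  have hVup_eq : Vup = c * X / n := by
    rw [hVup, hXdef]
    field_simp
  have hVup0 : 0 < Vup := by rw [hVup_eq]; positivity
  have hVlow_eq : Vlow = P / (c * n) := by rw [hVlow, hPdef]; ring
  constructor
  · rw [le_div_iff₀ hVup0, hVlow_eq, hVup_eq]
    have hexp : b⁻¹ ^ 2 * (1 + b)⁻¹ ^ 2 / c ^ 2 * (c * X / n)
        = X / (b ^ 2 * (1 + b) ^ 2) / (c * n) := by
      field_simp
    rw [hexp]
    gcongr
  · rw [div_le_one hVup0, hVlow_eq, hVup_eq]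
    rw [div_le_div_iff₀ (by positivity) hn0]
    have hcc : (1:ℝ) ≤ c * c := by
      have h := mul_le_mul hc.le hc.le zero_le_one hc0.le
      simpa using h
    calc P * (n:ℝ) ≤ X * (n:ℝ) := mul_le_mul_of_nonneg_right hPup hn0.le
      _ = 1 * (X * (n:ℝ)) := (one_mul _).symm
      _ ≤ (c * c) * (X * (n:ℝ)) := by
          apply mul_le_mul_of_nonneg_right hcc
          exact mul_nonneg hX0.le hn0.le
      _ = c * X * (c * (n:ℝ)) := by ring
end
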